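/- For every real number x with |x| < π/2, the series \(\sum_{n\ge 1} (-1)^n\, 2(1 - 4^n) B_{2n} (2x)^{2n-1}/(2n)!\) converges and its sum equals \(\tan(x)\). -/

import Mathlib

open Real

noncomputable section
namespace TanAux
open PowerSeries

/-- Coefficients of the tangent power series. -/
def tc (m : ℕ) : ℝ :=
  if Even m then 0
  else (-1 : ℝ) ^ (m / 2 + 1) * (2 * (1 - (4 : ℝ) ^ (m / 2 + 1))) * (bernoulli (m + 1) : ℝ) *
    2 ^ m / (Nat.factorial (m + 1) : ℝ)

lemma hPQ : rescale Complex.I (exp ℂ) * rescale (-Complex.I) (exp ℂ) = 1 := by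
  rw [exp_mul_exp_eq_exp_add, add_neg_cancel, rescale_zero]
  simp

lemma hP : rescale Complex.I (exp ℂ) = PowerSeries.cos ℂ + C Complex.I * PowerSeries.sin ℂ := by
  ext n
  simp only [coeff_rescale, coeff_exp, map_add, coeff_C_mul, PowerSeries.cos, PowerSeries.sin,
    coeff_mk, eq_ratCast]
  rcases Nat.even_or_odd n with he | ho
  · obtain ⟨k, rfl⟩ := he
    have h2 : (k + k) / 2 = k := by omega
    rw [if_pos (by exact ⟨k, rfl⟩), if_pos (by exact ⟨k, rfl⟩), h2]
    have : (Complex.I) ^ (k + k) = (-1 : ℂ) ^ k := by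
      rw [← two_mul, pow_mul, Complex.I_sq]
    rw [this]
    push_cast
    ring
  · obtain ⟨k, rfl⟩ := ho
    have h2 : (2 * k + 1) / 2 = k := by omega
    rw [if_neg (by simp [Nat.even_iff, Nat.add_mod, Nat.mul_mod]), if_neg (by simp [Nat.even_iff, Nat.add_mod, Nat.mul_mod]), h2]
    have : (Complex.I) ^ (2 * k + 1) = (-1 : ℂ) ^ k * Complex.I := by
      rw [pow_succ, pow_mul, Complex.I_sq]
    rw [this]
    push_cast
    ring

lemma hQ : rescale (-Complex.I) (exp ℂ) = PowerSeries.cos ℂ - C Complex.I * PowerSeries.sin ℂ := by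
  ext n
  simp only [coeff_rescale, coeff_exp, map_sub, coeff_C_mul, PowerSeries.cos, PowerSeries.sin,
    coeff_mk, eq_ratCast]
  rcases Nat.even_or_odd n with he | ho
  · obtain ⟨k, rfl⟩ := he
    have h2 : (k + k) / 2 = k := by omega
    rw [if_pos (by exact ⟨k, rfl⟩), if_pos (by exact ⟨k, rfl⟩), h2]
    have : (-Complex.I) ^ (k + k) = (-1 : ℂ) ^ k := by
      rw [← two_mul, pow_mul]
      simp [Complex.I_sq]
    rw [this]
    push_cast
    ring
  · obtain ⟨k, rfl⟩ := ho
    have h2 : (2 * k + 1) / 2 = k := by omega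
    rw [if_neg (by simp [Nat.even_iff, Nat.add_mod, Nat.mul_mod]), if_neg (by simp [Nat.even_iff, Nat.add_mod, Nat.mul_mod]), h2]
    have : (-Complex.I) ^ (2 * k + 1) = -((-1 : ℂ) ^ k * Complex.I) := by
      rw [pow_succ, pow_mul]
      simp [Complex.I_sq]
    rw [this]
    push_cast
    ring

end TanAux
end

noncomputable section
namespace TanAux
open PowerSeries

abbrev P : PowerSeries ℂ := rescale Complex.I (exp ℂ)

lemma h1 : rescale (2 * Complex.I) (bernoulliPowerSeries ℂ) * (P * P - 1)
    = C (2 * Complex.I) * X := by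
  have h := congrArg (rescale (2 * Complex.I)) (bernoulliPowerSeries_mul_exp_sub_one ℂ)
  rw [map_mul, map_sub, map_one, rescale_X] at h
  rw [← h]
  congr 2
  rw [show (2 : ℂ) * Complex.I = Complex.I + Complex.I by ring, ← exp_mul_exp_eq_exp_add]

lemma h2 : rescale (4 * Complex.I) (bernoulliPowerSeries ℂ) * (P * P * (P * P) - 1)
    = C (4 * Complex.I) * X := by
  have h := congrArg (rescale (4 * Complex.I)) (bernoulliPowerSeries_mul_exp_sub_one ℂ)
  rw [map_mul, map_sub, map_one, rescale_X] at h
  rw [← h]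
  congr 2
  rw [show (4 : ℂ) * Complex.I = (2 * Complex.I) + (2 * Complex.I) by ring,
    ← exp_mul_exp_eq_exp_add,
    show (2 : ℂ) * Complex.I = Complex.I + Complex.I by ring, ← exp_mul_exp_eq_exp_add]

end TanAux
end

noncomputable section
namespace TanAux
open PowerSeries

lemma bodd {m : ℕ} (h : Odd m) (h1 : 1 < m) : (bernoulli m : ℂ) = 0 := by
  rw [bernoulli_eq_bernoulli'_of_ne_one (by omega), bernoulli'_eq_zero_of_odd h h1]
  simp

lemma hCT : X * map (algebraMap ℝ ℂ) (PowerSeries.mk tc)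
    = rescale (2 * Complex.I) (bernoulliPowerSeries ℂ)
      - rescale (4 * Complex.I) (bernoulliPowerSeries ℂ) - C Complex.I * X := by
  ext m
  rw [map_sub, map_sub]
  cases m with
  | zero =>
      simp [bernoulliPowerSeries, coeff_rescale, tc]
  | succ m =>
      rw [coeff_succ_X_mul, coeff_map, coeff_mk]
      simp only [bernoulliPowerSeries, coeff_rescale, coeff_mk, coeff_C_mul, coeff_X]
      rcases Nat.even_or_odd m with he | ho
      · -- tc m = 0
        rw [show tc m = 0 from if_pos he]
        rcases Nat.eq_zero_or_pos m with rfl | hm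
        · norm_num [bernoulli_one]
          ring
        · have hodd : Odd (m + 1) := he.add_one
          have h1 : 1 < m + 1 := by omega
          have hb : algebraMap ℚ ℂ (bernoulli (m + 1) / ((m + 1).factorial : ℚ)) = 0 := by
            rw [bernoulli_eq_bernoulli'_of_ne_one (by omega), bernoulli'_eq_zero_of_odd hodd h1]
            simp
          rw [hb, if_neg (by omega)]
          simp
      · obtain ⟨k, rfl⟩ := ho
        have hdiv : (2 * k + 1) / 2 = k := by omega
        have htc : tc (2 * k + 1) = (-1 : ℝ) ^ (k + 1) * (2 * (1 - (4 : ℝ) ^ (k + 1))) *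
            (bernoulli (2 * k + 1 + 1) : ℝ) * 2 ^ (2 * k + 1)
              / (Nat.factorial (2 * k + 1 + 1) : ℝ) := by
          rw [tc, if_neg (by simp [Nat.even_iff, Nat.add_mod, Nat.mul_mod]), hdiv]
        rw [htc, if_neg (show ¬(2 * k + 1 + 1 = 1) by omega), eq_ratCast, mul_zero, sub_zero]
        have e1 : ((2 : ℂ) * Complex.I) ^ (2 * k + 1 + 1) = (-4 : ℂ) ^ (k + 1) := by
          rw [show 2 * k + 1 + 1 = 2 * (k + 1) by ring, pow_mul]
          norm_num [mul_pow, Complex.I_sq]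
        have e2 : ((4 : ℂ) * Complex.I) ^ (2 * k + 1 + 1) = (-16 : ℂ) ^ (k + 1) := by
          rw [show 2 * k + 1 + 1 = 2 * (k + 1) by ring, pow_mul]
          norm_num [mul_pow, Complex.I_sq]
        rw [e1, e2]
        have hf : (((2 * k + 2).factorial : ℚ) : ℂ) ≠ 0 := by exact_mod_cast (Nat.factorial_ne_zero _)
        have e3 : (-4 : ℂ) ^ (k + 1) = (-1) ^ (k + 1) * 2 ^ (2 * k + 1) * 2 := by
          rw [show (-4 : ℂ) = (-1) * 2 ^ 2 by norm_num, mul_pow, ← pow_mul,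
            show 2 * (k + 1) = 2 * k + 1 + 1 by ring]
          ring
        have e4 : (-16 : ℂ) ^ (k + 1)
            = (-1) ^ (k + 1) * (4 : ℂ) ^ (k + 1) * 2 ^ (2 * k + 1) * 2 := by
          rw [show (-16 : ℂ) = (-1) * 4 * 2 ^ 2 by norm_num, mul_pow, mul_pow, ← pow_mul,
            show 2 * (k + 1) = 2 * k + 1 + 1 by ring]
          ring
        rw [e3, e4]
        push_cast
        field_simp
end TanAux
end

noncomputable section
namespace TanAux
open PowerSeries

lemma coeff_one_sin : (PowerSeries.coeff 1) (PowerSeries.sin ℂ) = 1 := by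
  simp [PowerSeries.sin, Nat.factorial]

lemma master_complex :
    map (algebraMap ℝ ℂ) (PowerSeries.mk tc) * PowerSeries.cos ℂ = PowerSeries.sin ℂ := by
  have hc2 : C (2 * Complex.I) = 2 * C Complex.I := by rw [map_mul, map_ofNat]
  have hc4 : C (4 * Complex.I) = 4 * C Complex.I := by rw [map_mul, map_ofNat]
  have h1'' := h1; rw [hc2] at h1''
  have h2'' := h2; rw [hc4] at h2''
  have hCT'' := hCT
  set TC := map (algebraMap ℝ ℂ) (PowerSeries.mk tc) with hTC
  set c := PowerSeries.cos ℂ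
  set s := PowerSeries.sin ℂ
  set J := C Complex.I with hJ
  set R2 := rescale (2 * Complex.I) (bernoulliPowerSeries ℂ)
  set R4 := rescale (4 * Complex.I) (bernoulliPowerSeries ℂ)
  set Q := rescale (-Complex.I) (exp ℂ) with hQdef
  have hI : J * J = -1 := by rw [hJ, ← map_mul, Complex.I_mul_I, map_neg, map_one]
  have hs1 : (PowerSeries.coeff 1) s = 1 := coeff_one_sin
  have hsne : s ≠ 0 := by
    intro h
    rw [h, map_zero] at hs1
    exact one_ne_zero hs1.symm
  have hXs : (X : PowerSeries ℂ) * s ≠ 0 := mul_ne_zero X_ne_zero hsne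
  have h2J : (2 * J : PowerSeries ℂ) ≠ 0 := by
    intro h
    have := congrArg (PowerSeries.coeff 0) h
    simp [hJ, coeff_zero_eq_constantCoeff, Complex.I_ne_zero] at this
    rw [map_ofNat] at this
    norm_num at this
  have h4J : (4 * J : PowerSeries ℂ) ≠ 0 := by
    intro h
    have := congrArg (PowerSeries.coeff 0) h
    simp [hJ, coeff_zero_eq_constantCoeff, Complex.I_ne_zero] at this
    rw [map_ofNat] at this
    norm_num at this
  have t1 : (2 * J) * (R2 * s) = (2 * J) * ((X : PowerSeries ℂ) * Q) := by
    linear_combination Q * h1'' + R2 * (-P * hPQ - hP + hQ)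
  have hBQ2 : R2 * s = (X : PowerSeries ℂ) * Q := mul_left_cancel₀ h2J t1
  have t2 : (4 * J) * (R4 * (c * s)) = (4 * J) * ((X : PowerSeries ℂ) * (Q * Q)) := by
    linear_combination (Q * Q) * h2'' + R4 * ((-2 * c) * (hP - hQ) - (P - Q) * (hP + hQ)
      - (P * P * (P * Q + 1)) * hPQ)
  have hBQ4 : R4 * (c * s) = (X : PowerSeries ℂ) * (Q * Q) := mul_left_cancel₀ h4J t2
  have key : TC * c * ((X : PowerSeries ℂ) * s) = s * ((X : PowerSeries ℂ) * s) := by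
    linear_combination (c * s) * hCT'' + c * hBQ2 - hBQ4 + (X : PowerSeries ℂ) * (-Q + J * s) * hQ
      - (X : PowerSeries ℂ) * s * s * hI
  exact mul_right_cancel₀ hXs key

lemma master_real : PowerSeries.mk tc * PowerSeries.cos ℝ = PowerSeries.sin ℝ := by
  have h3 : map (algebraMap ℝ ℂ) (PowerSeries.mk tc * PowerSeries.cos ℝ)
      = map (algebraMap ℝ ℂ) (PowerSeries.sin ℝ) := by
    rw [map_mul, PowerSeries.map_cos, PowerSeries.map_sin, master_complex]
  ext n
  have h4 := congrArg (PowerSeries.coeff n) h3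
  rw [coeff_map, coeff_map] at h4
  exact Complex.ofReal_injective (by simpa using h4)

end TanAux
end

noncomputable section
namespace TanAux
open PowerSeries

lemma bern_bound {k : ℕ} (hk : k ≠ 0) :
    |(bernoulli (2 * k) : ℝ)| / ((2 * k).factorial : ℝ) ≤ 4 / (2 * π) ^ (2 * k) := by
  have hπ := Real.pi_pos
  have hsum := hasSum_zeta_nat hk
  set Z := (-1 : ℝ) ^ (k + 1) * 2 ^ (2 * k - 1) * π ^ (2 * k) * (bernoulli (2 * k) : ℝ) /
    ((2 * k).factorial : ℝ) with hZ
  have hZ0 : 0 ≤ Z := hsum.nonneg fun n => by positivity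
  have hZ2 : Z ≤ π ^ 2 / 6 := by
    refine hasSum_le (fun n => ?_) hsum hasSum_zeta_two
    rcases Nat.eq_zero_or_pos n with rfl | hn
    · simp [zero_pow, hk]
    · have h1 : (1 : ℝ) ≤ (n : ℝ) := by exact_mod_cast hn
      have : (n : ℝ) ^ 2 ≤ (n : ℝ) ^ (2 * k) := by
        apply pow_le_pow_right₀ h1
        omega
      apply one_div_le_one_div_of_le (by positivity) this
  have hfac : (0 : ℝ) < ((2 * k).factorial : ℝ) := by positivity
  have hsign : (0 : ℝ) ≤ (-1 : ℝ) ^ (k + 1) * (bernoulli (2 * k) : ℝ) := by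
    by_contra hneg
    push_neg at hneg
    have hp : (0 : ℝ) < 2 ^ (2 * k - 1) * π ^ (2 * k) := by positivity
    have : Z < 0 := by
      rw [hZ]
      apply div_neg_of_neg_of_pos _ hfac
      nlinarith
    linarith
  have habs : |(bernoulli (2 * k) : ℝ)| = (-1 : ℝ) ^ (k + 1) * (bernoulli (2 * k) : ℝ) := by
    rw [← abs_of_nonneg hsign, abs_mul, abs_pow, abs_neg, abs_one, one_pow, one_mul]
  have h2k : (2 : ℝ) ^ (2 * k - 1) * 2 = 2 ^ (2 * k) := by
    rw [← pow_succ]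
    congr 1
    omega
  have hrel : |(bernoulli (2 * k) : ℝ)| / ((2 * k).factorial : ℝ) = Z * 2 / (2 * π) ^ (2 * k) := by
    rw [habs, hZ, mul_pow]
    field_simp
    linear_combination (-(bernoulli (2 * k) : ℝ)) * h2k
  rw [hrel]
  have hπ2 : π ^ 2 ≤ 12 := by nlinarith [Real.pi_lt_d2]
  gcongr
  linarith

lemma tc_bound (m : ℕ) : |tc m| ≤ 8 / π * (2 / π) ^ m := by
  have hπ := Real.pi_pos
  rcases Nat.even_or_odd m with he | ho
  · rw [tc, if_pos he, abs_zero]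
    positivity
  · obtain ⟨k, rfl⟩ := ho
    have hdiv : (2 * k + 1) / 2 = k := by omega
    rw [tc, if_neg (by simp [Nat.even_iff, Nat.add_mod, Nat.mul_mod]), hdiv]
    have hb := bern_bound (k := k + 1) (by omega)
    rw [show 2 * (k + 1) = 2 * k + 1 + 1 by ring] at hb
    have h14 : (1 : ℝ) ≤ 4 ^ (k + 1) := one_le_pow₀ (by norm_num)
    have h4 : |1 - (4 : ℝ) ^ (k + 1)| ≤ 4 ^ (k + 1) := by
      rw [abs_sub_comm, abs_of_nonneg (by linarith)]
      linarith
    have hBnn : (0:ℝ) ≤ |(bernoulli (2 * k + 1 + 1) : ℝ)| := abs_nonneg _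
    have hFpos : (0:ℝ) < ((2 * k + 1 + 1).factorial : ℝ) := by positivity
    have e4 : (4 : ℝ) ^ (k + 1) = 2 ^ (2 * k + 1) * 2 := by
      rw [show (4 : ℝ) = 2 ^ 2 by norm_num, ← pow_mul, show 2 * (k + 1) = 2 * k + 1 + 1 by ring,
        pow_succ]
    calc |(-1 : ℝ) ^ (k + 1) * (2 * (1 - (4 : ℝ) ^ (k + 1))) * (bernoulli (2 * k + 1 + 1) : ℝ) *
            2 ^ (2 * k + 1) / ((2 * k + 1 + 1).factorial : ℝ)|
        = 2 * |1 - (4 : ℝ) ^ (k + 1)| * |(bernoulli (2 * k + 1 + 1) : ℝ)| * 2 ^ (2 * k + 1)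
            / ((2 * k + 1 + 1).factorial : ℝ) := by
          rw [abs_div, abs_mul, abs_mul, abs_mul, abs_pow, abs_pow, abs_neg, abs_one, one_pow,
            one_mul, abs_mul, Nat.abs_cast]
          norm_num
      _ ≤ 2 * (4 : ℝ) ^ (k + 1) * |(bernoulli (2 * k + 1 + 1) : ℝ)| * 2 ^ (2 * k + 1)
            / ((2 * k + 1 + 1).factorial : ℝ) := by gcongr
      _ = (2 * (4 : ℝ) ^ (k + 1) * 2 ^ (2 * k + 1)) *
            (|(bernoulli (2 * k + 1 + 1) : ℝ)| / ((2 * k + 1 + 1).factorial : ℝ)) := by ring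
      _ ≤ (2 * (4 : ℝ) ^ (k + 1) * 2 ^ (2 * k + 1)) * (4 / (2 * π) ^ (2 * k + 1 + 1)) :=
          mul_le_mul_of_nonneg_left hb (by positivity)
      _ = 8 / π * (2 / π) ^ (2 * k + 1) := by
          rw [e4, mul_pow, div_pow, pow_succ, pow_succ]
          field_simp
          ring
end TanAux
end

noncomputable section
namespace TanAux
open PowerSeries

lemma coeff_cos_abs (m : ℕ) :
    |PowerSeries.coeff m (PowerSeries.cos ℝ)| ≤ 1 / (m.factorial : ℝ) := by
  rw [PowerSeries.cos, coeff_mk]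
  split_ifs with h
  · rw [eq_ratCast]
    push_cast
    rw [abs_div, abs_pow, abs_neg, abs_one, one_pow, abs_of_nonneg (by positivity)]
  · rw [abs_zero]
    positivity

lemma coeff_cos_even (n : ℕ) :
    PowerSeries.coeff (2 * n) (PowerSeries.cos ℝ) = (-1) ^ n / ((2 * n).factorial : ℝ) := by
  rw [PowerSeries.cos, coeff_mk, if_pos (even_two_mul n), eq_ratCast]
  push_cast
  rw [Nat.mul_div_cancel_left n (by norm_num)]

lemma coeff_cos_odd {m : ℕ} (h : ¬ Even m) :
    PowerSeries.coeff m (PowerSeries.cos ℝ) = 0 := by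
  rw [PowerSeries.cos, coeff_mk, if_neg h]

lemma coeff_sin_odd (n : ℕ) :
    PowerSeries.coeff (2 * n + 1) (PowerSeries.sin ℝ)
      = (-1) ^ n / ((2 * n + 1).factorial : ℝ) := by
  rw [PowerSeries.sin, coeff_mk, if_neg (by simp [Nat.even_iff, Nat.add_mod, Nat.mul_mod]),
    eq_ratCast]
  push_cast
  rw [show (2 * n + 1) / 2 = n by omega]

lemma coeff_sin_even {m : ℕ} (h : Even m) :
    PowerSeries.coeff m (PowerSeries.sin ℝ) = 0 := by
  rw [PowerSeries.sin, coeff_mk, if_pos h]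

end TanAux
end

open TanAux in
theorem hasSum_bernoulli_tan (x : ℝ) (hx : |x| < π / 2) :
    HasSum
      (fun n : ℕ =>
        (-1 : ℝ) ^ (n + 1) * (2 * (1 - (4 : ℝ) ^ (n + 1))) * (bernoulli (2 * (n + 1)) : ℝ) *
          (2 * x) ^ (2 * (n + 1) - 1) / (Nat.factorial (2 * (n + 1)) : ℝ))
      (Real.tan x) := by
  have hπ := Real.pi_pos
  have hxx := abs_lt.mp hx
  have hcos : Real.cos x ≠ 0 :=
    ne_of_gt (Real.cos_pos_of_mem_Ioo ⟨by linarith [hxx.1], by linarith [hxx.2]⟩)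
  set f : ℕ → ℝ := fun m => tc m * x ^ m with hfdef
  set g : ℕ → ℝ := fun m => PowerSeries.coeff m (PowerSeries.cos ℝ) * x ^ m with hgdef
  set h : ℕ → ℝ := fun m => PowerSeries.coeff m (PowerSeries.sin ℝ) * x ^ m with hhdef
  -- summability of f in norm
  have hr0 : (0 : ℝ) ≤ 2 * |x| / π := by positivity
  have hr1 : 2 * |x| / π < 1 := by
    rw [div_lt_one hπ]
    linarith
  have hfn : Summable fun m => ‖f m‖ := by
    apply Summable.of_nonneg_of_le (fun m => norm_nonneg _)
      (f := fun m => 8 / π * (2 * |x| / π) ^ m)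
    · intro m
      have h1 : ‖f m‖ = |tc m| * |x| ^ m := by
        rw [hfdef, Real.norm_eq_abs, abs_mul, abs_pow]
      rw [h1]
      calc |tc m| * |x| ^ m ≤ 8 / π * (2 / π) ^ m * |x| ^ m := by
            apply mul_le_mul_of_nonneg_right (tc_bound m) (by positivity)
        _ = 8 / π * (2 * |x| / π) ^ m := by
            rw [mul_assoc, ← mul_pow]
            congr 2
            field_simp
    · exact (summable_geometric_of_lt_one hr0 hr1).mul_left _
  have hgn : Summable fun m => ‖g m‖ := by
    apply Summable.of_nonneg_of_le (fun m => norm_nonneg _)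
      (f := fun m => |x| ^ m / (m.factorial : ℝ))
    · intro m
      rw [hgdef, Real.norm_eq_abs, abs_mul, abs_pow]
      calc |PowerSeries.coeff m (PowerSeries.cos ℝ)| * |x| ^ m
          ≤ 1 / (m.factorial : ℝ) * |x| ^ m :=
            mul_le_mul_of_nonneg_right (coeff_cos_abs m) (by positivity)
        _ = |x| ^ m / (m.factorial : ℝ) := by ring
    · exact Real.summable_pow_div_factorial _
  have hfs : Summable f := hfn.of_norm
  have hS : HasSum f (∑' m, f m) := hfs.hasSum
  -- cos and sin as full-index sums
  have hg : HasSum g (Real.cos x) := by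
    have hinj : Function.Injective (fun n : ℕ => 2 * n) := fun a b hab => by
      simp only at hab; omega
    refine (Function.Injective.hasSum_iff hinj ?_).1 ?_
    · intro m hm
      have : ¬ Even m := by
        intro ⟨r, hr⟩
        exact hm ⟨r, show 2 * r = m by omega⟩
      rw [hgdef]
      simp only
      rw [coeff_cos_odd this, zero_mul]
    · have := Real.hasSum_cos x
      convert this using 1
      funext n
      simp only [Function.comp_apply, hgdef]
      rw [coeff_cos_even]
      ring
  have hh : HasSum h (Real.sin x) := by
    have hinj : Function.Injective (fun n : ℕ => 2 * n + 1) := fun a b hab => by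
      simp only at hab; omega
    refine (Function.Injective.hasSum_iff hinj ?_).1 ?_
    · intro m hm
      have : Even m := by
        rcases Nat.even_or_odd m with he | ⟨r, hr⟩
        · exact he
        · exact absurd (Set.mem_range.mpr ⟨r, show 2 * r + 1 = m by omega⟩) hm
      rw [hhdef]
      simp only
      rw [coeff_sin_even this, zero_mul]
    · have := Real.hasSum_sin x
      convert this using 1
      funext n
      simp only [Function.comp_apply, hhdef]
      rw [coeff_sin_odd]
      ring
  -- Cauchy product
  have hcauchy := tsum_mul_tsum_eq_tsum_sum_antidiagonal_of_summable_norm hfn hgn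
  have hinner : ∀ n : ℕ, (∑ kl ∈ Finset.HasAntidiagonal.antidiagonal n, f kl.1 * g kl.2) = h n := by
    intro n
    rw [hhdef]
    simp only
    rw [← master_real, PowerSeries.coeff_mul, Finset.sum_mul]
    apply Finset.sum_congr rfl
    intro p hp
    have hpn : p.1 + p.2 = n := Finset.HasAntidiagonal.mem_antidiagonal.mp hp
    rw [hfdef, hgdef]
    simp only
    rw [PowerSeries.coeff_mk, ← hpn, pow_add]
    ring
  rw [hg.tsum_eq] at hcauchy
  simp_rw [hinner] at hcauchy
  rw [hh.tsum_eq] at hcauchy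
  -- conclude tsum f = tan x
  have htan : (∑' m, f m) = Real.tan x := by
    rw [Real.tan_eq_sin_div_cos, eq_div_iff hcos]
    exact hcauchy
  rw [htan] at hS
  -- restrict to odd indices
  have hinj : Function.Injective (fun n : ℕ => 2 * n + 1) := fun a b hab => by
    simp only at hab; omega
  have hvan : ∀ m ∉ Set.range (fun n : ℕ => 2 * n + 1), f m = 0 := by
    intro m hm
    have heven : Even m := by
      rcases Nat.even_or_odd m with he | ⟨r, hr⟩
      · exact he
      · exact absurd (Set.mem_range.mpr ⟨r, show 2 * r + 1 = m by omega⟩) hm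
    rw [hfdef]
    simp only
    rw [tc, if_pos heven, zero_mul]
  have hfinal := (Function.Injective.hasSum_iff hinj hvan).2 hS
  convert hfinal using 1
  funext n
  simp only [Function.comp_apply, hfdef]
  have hdiv : (2 * n + 1) / 2 = n := by omega
  rw [tc, if_neg (by simp [Nat.even_iff, Nat.add_mod, Nat.mul_mod]), hdiv]
  rw [show 2 * (n + 1) - 1 = 2 * n + 1 by omega, show 2 * n + 1 + 1 = 2 * (n + 1) by ring,
    mul_pow]
  ring
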